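/- If $A_\mathcal{D} - \lambda$ is bijective (in the setting of the reduction to the boundary) then its inverse equals $B(\lambda) + [1 - B(\lambda)(A-\lambda)] \circ F_\mathcal{D}(\lambda)^{-1} \circ T(\lambda)$, where $F_\mathcal{D}(\lambda)$ is the induced map $\mathcal{D}/\mathcal{D}_{\min} \to \mathbb{C}^d$, $[q(u)] \mapsto T(\lambda)(A-\lambda)u$, and $[1-B(\lambda)(A-\lambda)]$ is the induced map on the quotient. That is, the resolvent splits as $(A_\mathcal{D}-\lambda)^{-1} = B(\lambda) + G_\mathcal{D}(\lambda)$ with $G_\mathcal{D}(\lambda)$ of rank at most $\dim(\mathcal{D}/\mathcal{D}_{\min}) \le d$. -/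
import Mathlib


/-- Splitting of the resolvent: if `A_𝒟 - λ` is bijective then its inverse equals
`B(λ) + G_𝒟(λ)` where `G_𝒟(λ) = [1 - B(λ)(A-λ)] ∘ F_𝒟(λ)⁻¹ ∘ T(λ)` is of rank at most
`dim 𝒟/𝒟_min ≤ d`.  Here `Alam` stands for the operator `A - λ`, `P` is the induced map
`[1 - B(λ)(A-λ)]` on `𝒟/𝒟_min`, `F` the induced map `[T(λ)(A-λ)]`, and `Finv` its inverse. -/
theorem stmt6 {H : Type*} [AddCommGroup H] [Module ℂ H] (d : ℕ)
    (Dmin D : Submodule ℂ H) (hle : Dmin ≤ D)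
    [FiniteDimensional ℂ (↥D ⧸ Dmin.comap D.subtype)]
    (Alam B : H →ₗ[ℂ] H) (K : (Fin d → ℂ) →ₗ[ℂ] H) (T : H →ₗ[ℂ] (Fin d → ℂ))
    (hBmem : ∀ w, B w ∈ Dmin)
    (hBA : ∀ u ∈ Dmin, B (Alam u) = u)
    (hTA : ∀ u ∈ Dmin, T (Alam u) = 0)
    (hright : ∀ w, Alam (B w) + K (T w) = w)
    (P : (↥D ⧸ Dmin.comap D.subtype) →ₗ[ℂ] H)
    (hP : ∀ u : ↥D, P (Submodule.Quotient.mk u) = (u : H) - B (Alam (u : H)))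
    (F : (↥D ⧸ Dmin.comap D.subtype) →ₗ[ℂ] (Fin d → ℂ))
    (hF : ∀ u : ↥D, F (Submodule.Quotient.mk u) = T (Alam (u : H)))
    (Finv : (Fin d → ℂ) →ₗ[ℂ] (↥D ⧸ Dmin.comap D.subtype))
    (hFinv₁ : ∀ q, Finv (F q) = q) (hFinv₂ : ∀ v, F (Finv v) = v)
    (hbij : Function.Bijective (fun u : D => Alam (u : H))) :
    (∀ w, B w + (P ∘ₗ Finv ∘ₗ T) w ∈ D) ∧
    (∀ w, Alam (B w + (P ∘ₗ Finv ∘ₗ T) w) = w) ∧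
    (∀ u ∈ D, B (Alam u) + (P ∘ₗ Finv ∘ₗ T) (Alam u) = u) ∧
    Module.finrank ℂ ↥(LinearMap.range (P ∘ₗ Finv ∘ₗ T))
      ≤ Module.finrank ℂ (↥D ⧸ Dmin.comap D.subtype) ∧
    Module.finrank ℂ (↥D ⧸ Dmin.comap D.subtype) ≤ d := by
  have hPmem : ∀ q, P q ∈ D := by
    intro q
    obtain ⟨u, rfl⟩ := Submodule.Quotient.mk_surjective _ q
    rw [hP]
    exact sub_mem u.2 (hle (hBmem _))
  have hAP : ∀ q, Alam (P q) = K (F q) := by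
    intro q
    obtain ⟨u, rfl⟩ := Submodule.Quotient.mk_surjective _ q
    have h := hright (Alam (u : H))
    rw [hP, hF, map_sub]
    rw [eq_comm, eq_sub_iff_add_eq, add_comm]; exact h
  refine ⟨?_, ?_, ?_, ?_, ?_⟩
  · intro w
    exact add_mem (hle (hBmem w)) (hPmem _)
  · intro w
    simp only [LinearMap.comp_apply, map_add, hAP, hFinv₂]
    exact hright w
  · intro u hu
    simp only [LinearMap.comp_apply]
    rw [← hF ⟨u, hu⟩, hFinv₁, hP]
    abel
  · calc Module.finrank ℂ ↥(LinearMap.range (P ∘ₗ Finv ∘ₗ T))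
        ≤ Module.finrank ℂ ↥(LinearMap.range P) := by
          apply Submodule.finrank_mono
          rw [show P ∘ₗ Finv ∘ₗ T = P ∘ₗ (Finv ∘ₗ T) from rfl]
          exact LinearMap.range_comp_le_range _ _
      _ ≤ Module.finrank ℂ (↥D ⧸ Dmin.comap D.subtype) :=
          LinearMap.finrank_range_le P
  · have hinj : Function.Injective F := Function.LeftInverse.injective hFinv₁
    calc Module.finrank ℂ (↥D ⧸ Dmin.comap D.subtype)
        ≤ Module.finrank ℂ (Fin d → ℂ) :=
          LinearMap.finrank_le_finrank_of_injective hinj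
      _ = d := Module.finrank_fin_fun ℂ
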